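/- arXiv:2306.10554 — 2 statements merged into one kernel-verified Lean document; each statement's English description precedes it below -/
import Mathlib

section
/- For every x ∈ ℝⁿ and every index i ∈ {1,…,n}, the sum over configurations with θ_i = 1 can be rewritten as a weighted sum over configurations with θ_i = 0: ∑_{θ∈{0,1}ⁿ, θ_i=1} v_i(θ) f(x,θ) = exp(-((k²/2)·t_{i,i} - k·∑_{j=1}^{n} t_{j,i} x_j)) · ∑_{θ∈{0,1}ⁿ, θ_i=0} v_i(θ) f(x,θ) · exp(-k² · ∑_{j≠i} θ_j t_{j,i}). -/
open Real MeasureTheory Matrix Finset BigOperators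

noncomputable section

/-- The real vector in `{0,1}ⁿ ⊆ ℝⁿ` associated to a binary configuration. -/
def bvec {n : ℕ} (θ : Fin n → Bool) : Fin n → ℝ := fun j => if θ j then 1 else 0

/-- The density of the `N_n(k·θ, Σ)` distribution at `x`. -/
def gdens (n : ℕ) (k : ℝ) (S : Matrix (Fin n) (Fin n) ℝ) (x θv : Fin n → ℝ) : ℝ :=
  (2 * π) ^ (-(n : ℝ) / 2) * S.det ^ (-(1 : ℝ) / 2) *
    Real.exp (-(1 / 2) * ((x - k • θv) ⬝ᵥ (S⁻¹ *ᵥ (x - k • θv))))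

/-- The i.i.d. Bernoulli(p) weight `∏ j, p^(θ j) (1-p)^(1 - θ j)` of a configuration `θ`. -/
def wBer (n : ℕ) (p : ℝ) (θ : Fin n → Bool) : ℝ :=
  ∏ j, (if θ j then p else 1 - p)

/-- The weight `v_i(θ) = ∏_{j ≠ i} p^(θ_j) (1-p)^(1-θ_j)`. -/
def vBer (n : ℕ) (p : ℝ) (i : Fin n) (θ : Fin n → Bool) : ℝ :=
  ∏ j ∈ Finset.univ.erase i, (if θ j then p else 1 - p)

/-- The sum over configurations with `θ_i = 1` rewritten as a weighted sum over
configurations with `θ_i = 0`. Here `S⁻¹ j i = t_{j,i}`. -/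
theorem sum_theta_one_eq {n : ℕ} (hn : 1 ≤ n) (k p : ℝ) (hk : k ≠ 0)
    (hp0 : 0 < p) (hp1 : p < 1)
    (S : Matrix (Fin n) (Fin n) ℝ) (hS : S.PosDef)
    (x : Fin n → ℝ) (i : Fin n) :
    ∑ θ ∈ Finset.univ.filter (fun θ : Fin n → Bool => θ i = true),
        vBer n p i θ * gdens n k S x (bvec θ) =
      Real.exp (-(k ^ 2 / 2 * S⁻¹ i i - k * ∑ j, S⁻¹ j i * x j)) *
        ∑ θ ∈ Finset.univ.filter (fun θ : Fin n → Bool => θ i = false),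
          vBer n p i θ * gdens n k S x (bvec θ) *
            Real.exp (-k ^ 2 * ∑ j ∈ Finset.univ.erase i, bvec θ j * S⁻¹ j i) := by
  have hsym : ∀ a b, S⁻¹ a b = S⁻¹ b a := by
    intro a b
    have := hS.isHermitian.inv.apply b a
    simpa using this
  rw [Finset.mul_sum]
  refine Finset.sum_nbij' (fun θ => Function.update θ i false)
    (fun θ => Function.update θ i true) ?_ ?_ ?_ ?_ ?_
  · intro θ hθ; simp
  · intro θ hθ; simp
  · intro θ hθ
    simp only [Finset.mem_filter] at hθ
    simp only [Function.update_idem]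
    rw [← hθ.2, Function.update_eq_self]
  · intro θ hθ
    simp only [Finset.mem_filter] at hθ
    simp only [Function.update_idem]
    rw [← hθ.2, Function.update_eq_self]
  · intro θ hθ
    simp only [Finset.mem_filter] at hθ
    set θ₀ := Function.update θ i false with hθ₀
    have hθ₀i : θ₀ i = false := Function.update_self i false θ
    have hv : vBer n p i θ₀ = vBer n p i θ := by
      refine Finset.prod_congr rfl fun j hj => ?_
      rw [hθ₀, Function.update_of_ne (Finset.ne_of_mem_erase hj)]
    have hbv : bvec θ = bvec θ₀ + Pi.single i (1 : ℝ) := by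
      funext j
      by_cases hji : j = i
      · subst hji
        simp [bvec, hθ₀i, hθ.2]
      · simp [bvec, hθ₀, Function.update_of_ne hji, Pi.single_eq_of_ne hji]
    set y : Fin n → ℝ := x - k • bvec θ₀ with hy
    have hyv : x - k • bvec θ = y - k • (Pi.single i 1 : Fin n → ℝ) := by
      rw [hbv, hy, smul_add]; abel
    have hQ : (x - k • bvec θ) ⬝ᵥ (S⁻¹ *ᵥ (x - k • bvec θ)) =
        y ⬝ᵥ (S⁻¹ *ᵥ y) - 2 * k * (∑ j, S⁻¹ j i * y j) + k ^ 2 * S⁻¹ i i := by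
      rw [hyv, Matrix.mulVec_sub, Matrix.mulVec_smul, Matrix.mulVec_single]
      rw [sub_dotProduct, dotProduct_sub, dotProduct_sub, smul_dotProduct,
        dotProduct_smul, smul_dotProduct]
      have h1 : y ⬝ᵥ (MulOpposite.op (1:ℝ) • S⁻¹.col i) = ∑ j, S⁻¹ j i * y j := by
        simp [dotProduct, mul_comm]
      have h2 : Pi.single i (1:ℝ) ⬝ᵥ (S⁻¹ *ᵥ y) = ∑ j, S⁻¹ j i * y j := by
        rw [single_dotProduct]
        simp only [one_mul, Matrix.mulVec, dotProduct]
        exact Finset.sum_congr rfl fun j _ => by rw [hsym i j]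
      have h3 : Pi.single i (1:ℝ) ⬝ᵥ (MulOpposite.op (1:ℝ) • S⁻¹.col i) = S⁻¹ i i := by
        rw [single_dotProduct]; simp
      rw [h1, h2, dotProduct_smul, h3]
      simp only [smul_eq_mul]
      ring
    have hyx : ∀ j, y j = x j - k * bvec θ₀ j := fun j => rfl
    have hsum : ∑ j, S⁻¹ j i * y j =
        (∑ j, S⁻¹ j i * x j) - k * ∑ j ∈ Finset.univ.erase i, bvec θ₀ j * S⁻¹ j i := by
      have : ∑ j ∈ Finset.univ.erase i, bvec θ₀ j * S⁻¹ j i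
          = ∑ j, bvec θ₀ j * S⁻¹ j i := by
        rw [← Finset.sum_erase_add _ _ (Finset.mem_univ i)]
        simp [bvec, hθ₀i]
      rw [this]
      simp only [hyx, mul_sub, Finset.sum_sub_distrib, Finset.mul_sum]
      congr 1
      exact Finset.sum_congr rfl fun j _ => by ring
    rw [hv]
    unfold gdens
    rw [hQ, hsum]
    have hE : (-(1/2) * (y ⬝ᵥ (S⁻¹ *ᵥ y) -
          2 * k * ((∑ j, S⁻¹ j i * x j) - k * ∑ j ∈ Finset.univ.erase i, bvec θ₀ j * S⁻¹ j i) +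
          k ^ 2 * S⁻¹ i i)) =
        (-(k ^ 2 / 2 * S⁻¹ i i - k * ∑ j, S⁻¹ j i * x j)) +
          ((-(1/2)) * (y ⬝ᵥ (S⁻¹ *ᵥ y)) +
            (-k ^ 2 * ∑ j ∈ Finset.univ.erase i, bvec θ₀ j * S⁻¹ j i)) := by ring
    rw [hE, Real.exp_add, Real.exp_add]
    ring
end
end

section
/- Under the joint model in which θ = (θ_1,…,θ_n) are i.i.d. Bernoulli(p) and, conditionally on θ, X ~ N_n(kθ, Σ): fix 0 < α < 1, let T_{OR,(1)}(X) ≤ ⋯ ≤ T_{OR,(n)}(X) denote the increasingly ordered values of T_{OR,1}(X),…,T_{OR,n}(X), and let k(X) = max{ l ∈ {1,…,n} : (1/l)·∑_{i=1}^{l} T_{OR,(i)}(X) ≤ α } (with k(X) = 0 when this set is empty). Consider the oracle procedure that rejects exactly the hypotheses attaining the k(X) smallest values of T_{OR,i}(X). If the expected number of rejections is positive, then this procedure controls the mFDR at level α: E[number of rejected hypotheses i with θ_i = 0] / E[number of rejected hypotheses] ≤ α. -/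
open Real MeasureTheory Matrix Finset BigOperators

noncomputable section

/-- The joint law of `(θ, X)` on `{0,1}ⁿ × ℝⁿ`, with density `w(θ) f(x, θ)` with respect to
counting measure times Lebesgue measure: `θ` is i.i.d. Bernoulli(p) and `X | θ ~ N_n(kθ, Σ)`. -/
def jointMeasure (n : ℕ) (k p : ℝ) (S : Matrix (Fin n) (Fin n) ℝ) :
    Measure ((Fin n → Bool) × (Fin n → ℝ)) :=
  (Measure.count.prod volume).withDensity
    (fun z => ENNReal.ofReal (wBer n p z.1 * gdens n k S z.2 (bvec z.1)))

/-- The oracle statistic `T_{OR,i}(x) = P(θ_i = 0 | X = x)`. -/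
def TOR (n : ℕ) (k p : ℝ) (S : Matrix (Fin n) (Fin n) ℝ) (i : Fin n) (x : Fin n → ℝ) : ℝ :=
  (∑ η ∈ Finset.univ.filter (fun η : Fin n → Bool => η i = false),
      wBer n p η * gdens n k S x (bvec η)) /
    (∑ η : Fin n → Bool, wBer n p η * gdens n k S x (bvec η))

/-- The permutation sorting the oracle statistics `T_{OR,1}(x), …, T_{OR,n}(x)` increasingly:
the `l`-th order statistic is `T_{OR, sortPerm x l}(x)`. -/
def sortPerm (n : ℕ) (k p : ℝ) (S : Matrix (Fin n) (Fin n) ℝ) (x : Fin n → ℝ) :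
    Equiv.Perm (Fin n) :=
  Tuple.sort (fun i => TOR n k p S i x)

/-- The data-dependent number of rejections
`k(x) = max { l ∈ {1,…,n} : (1/l) ∑_{i=1}^{l} T_{OR,(i)}(x) ≤ α }` (and `0` when the set is
empty); the running average is over the `l` smallest values of the oracle statistics. -/
def numRej (n : ℕ) (k p : ℝ) (S : Matrix (Fin n) (Fin n) ℝ) (α : ℝ) (x : Fin n → ℝ) : ℕ :=
  sSup {l : ℕ | 1 ≤ l ∧ l ≤ n ∧
    (1 / (l : ℝ)) * ∑ j ∈ Finset.univ.filter (fun j : Fin n => (j : ℕ) < l),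
      TOR n k p S (sortPerm n k p S x j) x ≤ α}

/-- The oracle procedure: reject exactly the hypotheses attaining the `k(x)` smallest values
of `T_{OR,i}(x)`. -/
def oracleRule (n : ℕ) (k p : ℝ) (S : Matrix (Fin n) (Fin n) ℝ) (α : ℝ)
    (x : Fin n → ℝ) : Fin n → Bool :=
  fun i => decide ((((sortPerm n k p S x).symm i : Fin n) : ℕ) < numRej n k p S α x)


/-! ### Auxiliary lemmas -/

section AuxLemmas

open ENNReal NNReal

lemma gdens_cont {n : ℕ} (k : ℝ) (S : Matrix (Fin n) (Fin n) ℝ) (θv : Fin n → ℝ) :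
    Continuous fun x : Fin n → ℝ => gdens n k S x θv := by
  unfold gdens; simp only [dotProduct, Matrix.mulVec]; fun_prop

lemma gdens_pos {n : ℕ} (k : ℝ) {S : Matrix (Fin n) (Fin n) ℝ} (hdet : 0 < S.det)
    (x θv : Fin n → ℝ) : 0 < gdens n k S x θv := by
  unfold gdens; positivity

lemma wBer_pos {n : ℕ} {p : ℝ} (hp0 : 0 < p) (hp1 : p < 1) (θ : Fin n → Bool) :
    0 < wBer n p θ :=
  Finset.prod_pos fun j _ => by by_cases h : θ j <;> simp [h] <;> linarith

section MeasAux
variable {n : ℕ} (k p : ℝ) (S : Matrix (Fin n) (Fin n) ℝ)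

abbrev hdens (θ : Fin n → Bool) (x : Fin n → ℝ) : ℝ := wBer n p θ * gdens n k S x (bvec θ)

lemma hdens_meas : Measurable (fun z : (Fin n → Bool) × (Fin n → ℝ) =>
    (hdens k p S z.1 z.2).toNNReal) := by
  apply Measurable.real_toNNReal
  have h : Measurable (fun w : (Fin n → ℝ) × (Fin n → Bool) => hdens k p S w.2 w.1) := by
    apply measurable_from_prod_countable_left
    intro θ
    dsimp only
    exact (continuous_const.mul (gdens_cont k S (bvec θ))).measurable
  exact h.comp measurable_swap

lemma joint_eq_sum : jointMeasure n k p S =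
    Measure.sum (fun θ : Fin n → Bool =>
      (Measure.map (Prod.mk θ) (volume : Measure (Fin n → ℝ))).withDensity
        (fun z => ((hdens k p S z.1 z.2).toNNReal : ℝ≥0∞))) := by
  rw [jointMeasure, Measure.count, Measure.prod_sum_left, withDensity_sum]
  congr 1
  funext θ
  rw [Measure.dirac_prod]
  rfl

variable {k p S} (hp0 : 0 < p) (hp1 : p < 1) (hdet : 0 < S.det)

include hp0 hp1 hdet in
lemma hdens_pos (θ : Fin n → Bool) (x : Fin n → ℝ) : 0 < hdens k p S θ x :=
  mul_pos (wBer_pos hp0 hp1 θ) (gdens_pos k hdet x (bvec θ))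

include hp0 hp1 hdet in
lemma integrable_component {f : (Fin n → Bool) × (Fin n → ℝ) → ℝ}
    (hf : Integrable f (jointMeasure n k p S)) (θ : Fin n → Bool) :
    Integrable (fun x => hdens k p S θ x * f (θ, x)) volume := by
  have h1 : Integrable f ((Measure.map (Prod.mk θ) (volume : Measure (Fin n → ℝ))).withDensity
      (fun z => ((hdens k p S z.1 z.2).toNNReal : ℝ≥0∞))) := by
    refine hf.mono_measure ?_
    rw [joint_eq_sum k p S]
    exact Measure.le_sum _ θ
  rw [integrable_withDensity_iff_integrable_smul (hdens_meas k p S)] at h1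
  rw [(measurableEmbedding_prodMk_left θ).integrable_map_iff] at h1
  refine h1.congr (Filter.Eventually.of_forall fun x => ?_)
  simp only [Function.comp_apply, NNReal.smul_def, smul_eq_mul]
  rw [Real.coe_toNNReal _ (hdens_pos hp0 hp1 hdet θ x).le]

include hp0 hp1 hdet in
lemma joint_integral {f : (Fin n → Bool) × (Fin n → ℝ) → ℝ}
    (hf : Integrable f (jointMeasure n k p S)) :
    ∫ z, f z ∂(jointMeasure n k p S)
      = ∑ θ : Fin n → Bool, ∫ x, hdens k p S θ x * f (θ, x) := by
  rw [joint_eq_sum k p S] at hf ⊢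
  rw [integral_sum_measure hf, tsum_fintype]
  refine Finset.sum_congr rfl fun θ _ => ?_
  rw [integral_withDensity_eq_integral_smul (hdens_meas k p S)]
  rw [(measurableEmbedding_prodMk_left θ).integral_map]
  refine integral_congr_ae (Filter.Eventually.of_forall fun x => ?_)
  simp only [NNReal.smul_def, smul_eq_mul]
  rw [Real.coe_toNNReal _ (hdens_pos hp0 hp1 hdet θ x).le]

end MeasAux

section Comb
variable (n : ℕ) (k p : ℝ) (S : Matrix (Fin n) (Fin n) ℝ) (α : ℝ) (x : Fin n → ℝ)

lemma card_filter_lt_of_le {m : ℕ} (h : m ≤ n) :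
    (Finset.univ.filter fun j : Fin n => (j:ℕ) < m).card = m := by
  have : (Finset.univ.filter fun j : Fin n => (j:ℕ) < m)
      = (Finset.range m).attachFin (fun i hi => lt_of_lt_of_le (Finset.mem_range.mp hi) h) := by
    ext j; simp [Finset.mem_attachFin]
  rw [this, Finset.card_attachFin, Finset.card_range]

lemma numRej_le : numRej n k p S α x ≤ n := by
  rw [numRej]
  rcases Set.eq_empty_or_nonempty {l : ℕ | 1 ≤ l ∧ l ≤ n ∧
    (1 / (l : ℝ)) * ∑ j ∈ Finset.univ.filter (fun j : Fin n => (j : ℕ) < l),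
      TOR n k p S (sortPerm n k p S x j) x ≤ α} with h | h
  · rw [h, csSup_empty]; exact Nat.zero_le n
  · exact (Nat.sSup_mem h ⟨n, fun l hl => hl.2.1⟩).2.1

lemma sum_rej_eq :
    ∑ i, (if oracleRule n k p S α x i then (1:ℝ) else 0) = (numRej n k p S α x : ℝ) := by
  simp only [oracleRule, decide_eq_true_eq]
  rw [← Equiv.sum_comp (sortPerm n k p S x)
    (fun i => if (((sortPerm n k p S x).symm i : Fin n) : ℕ) < numRej n k p S α x
      then (1:ℝ) else 0)]
  simp only [Equiv.symm_apply_apply]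
  rw [Finset.sum_boole]
  rw [card_filter_lt_of_le n (numRej_le n k p S α x)]

lemma sum_rej_TOR_le :
    ∑ i, (if oracleRule n k p S α x i then (1:ℝ) else 0) * TOR n k p S i x
      ≤ α * (numRej n k p S α x : ℝ) := by
  set σ := sortPerm n k p S x with hσ
  set m := numRej n k p S α x with hm
  have key : ∑ i, (if oracleRule n k p S α x i then (1:ℝ) else 0) * TOR n k p S i x
      = ∑ j ∈ Finset.univ.filter (fun j : Fin n => (j:ℕ) < m), TOR n k p S (σ j) x := by
    simp only [oracleRule, decide_eq_true_eq]
    rw [← Equiv.sum_comp σ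
      (fun i => (if ((σ.symm i : Fin n) : ℕ) < m then (1:ℝ) else 0) * TOR n k p S i x)]
    simp only [Equiv.symm_apply_apply]
    rw [Finset.sum_filter]
    exact Finset.sum_congr rfl fun j _ => by by_cases h : (j:ℕ) < m <;> simp [h]
  rw [key]
  rcases Nat.eq_zero_or_pos m with h0 | h1
  · rw [h0]
    simp
  · have hne : {l : ℕ | 1 ≤ l ∧ l ≤ n ∧
        (1 / (l : ℝ)) * ∑ j ∈ Finset.univ.filter (fun j : Fin n => (j : ℕ) < l),
          TOR n k p S (sortPerm n k p S x j) x ≤ α}.Nonempty := by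
      by_contra h
      rw [Set.not_nonempty_iff_eq_empty] at h
      have : m = 0 := by rw [hm, numRej, h, csSup_empty]; rfl
      omega
    have hmem := Nat.sSup_mem hne ⟨n, fun l hl => hl.2.1⟩
    rw [← numRej, ← hm] at hmem
    obtain ⟨hm1, hmn, hsum⟩ := hmem
    have hmpos : (0:ℝ) < (m:ℝ) := by exact_mod_cast h1
    rw [one_div, inv_mul_le_iff₀ hmpos] at hsum
    rw [← hσ] at hsum
    linarith [hsum]

end Comb

lemma pointwise_bound {n : ℕ} {k p : ℝ} {S : Matrix (Fin n) (Fin n) ℝ} (hn : 1 ≤ n)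
    (hp0 : 0 < p) (hp1 : p < 1) (hdet : 0 < S.det) (α : ℝ) (x : Fin n → ℝ) :
    ∑ θ : Fin n → Bool, hdens k p S θ x *
        (∑ i, (if oracleRule n k p S α x i then (1:ℝ) else 0) *
          (if θ i = false then (1:ℝ) else 0))
      ≤ α * ∑ θ : Fin n → Bool, hdens k p S θ x *
        (∑ i, (if oracleRule n k p S α x i then (1:ℝ) else 0)) := by
  have hDpos : 0 < ∑ η : Fin n → Bool, wBer n p η * gdens n k S x (bvec η) :=
    Finset.sum_pos (fun θ _ => hdens_pos hp0 hp1 hdet θ x) Finset.univ_nonempty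
  have hT : ∀ i : Fin n,
      ∑ θ : Fin n → Bool, hdens k p S θ x * (if θ i = false then (1:ℝ) else 0)
        = TOR n k p S i x * ∑ η : Fin n → Bool, wBer n p η * gdens n k S x (bvec η) := by
    intro i
    have h1 : ∀ θ : Fin n → Bool, hdens k p S θ x * (if θ i = false then (1:ℝ) else 0)
        = if θ i = false then hdens k p S θ x else 0 := fun θ => by
      by_cases h : θ i = false <;> simp [h]
    rw [Finset.sum_congr rfl (fun θ _ => h1 θ), ← Finset.sum_filter, TOR,
      div_mul_cancel₀ _ hDpos.ne']
  calc ∑ θ : Fin n → Bool, hdens k p S θ x *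
        (∑ i, (if oracleRule n k p S α x i then (1:ℝ) else 0) *
          (if θ i = false then (1:ℝ) else 0))
      = ∑ θ : Fin n → Bool, ∑ i, (if oracleRule n k p S α x i then (1:ℝ) else 0) *
          (hdens k p S θ x * (if θ i = false then (1:ℝ) else 0)) := by
        refine Finset.sum_congr rfl fun θ _ => ?_
        rw [Finset.mul_sum]
        exact Finset.sum_congr rfl fun i _ => by ring
    _ = ∑ i, ∑ θ : Fin n → Bool, (if oracleRule n k p S α x i then (1:ℝ) else 0) *
          (hdens k p S θ x * (if θ i = false then (1:ℝ) else 0)) := Finset.sum_comm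
    _ = ∑ i, (if oracleRule n k p S α x i then (1:ℝ) else 0) *
          (TOR n k p S i x * ∑ η : Fin n → Bool, wBer n p η * gdens n k S x (bvec η)) := by
        refine Finset.sum_congr rfl fun i _ => ?_
        rw [← Finset.mul_sum, hT i]
    _ = (∑ i, (if oracleRule n k p S α x i then (1:ℝ) else 0) * TOR n k p S i x) *
          ∑ η : Fin n → Bool, wBer n p η * gdens n k S x (bvec η) := by
        rw [Finset.sum_mul]
        exact Finset.sum_congr rfl fun i _ => by ring
    _ ≤ (α * (numRej n k p S α x : ℝ)) *
          ∑ η : Fin n → Bool, wBer n p η * gdens n k S x (bvec η) :=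
        mul_le_mul_of_nonneg_right (sum_rej_TOR_le n k p S α x) hDpos.le
    _ = α * ∑ θ : Fin n → Bool, hdens k p S θ x *
          (∑ i, (if oracleRule n k p S α x i then (1:ℝ) else 0)) := by
        have h2 : ∀ θ : Fin n → Bool, hdens k p S θ x *
            (∑ i, (if oracleRule n k p S α x i then (1:ℝ) else 0))
            = hdens k p S θ x * (numRej n k p S α x : ℝ) := fun θ => by
          rw [sum_rej_eq n k p S α x]
        rw [Finset.sum_congr rfl (fun θ _ => h2 θ), ← Finset.sum_mul]
        ring

end AuxLemmas

/-- The oracle procedure controls the mFDR at level `α`: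
`E[# rejected i with θ_i = 0] / E[# rejected] ≤ α`, provided the expected number of
rejections is positive. -/
theorem oracle_procedure_controls_mFDR {n : ℕ} (hn : 1 ≤ n) (k p : ℝ) (hk : k ≠ 0)
    (hp0 : 0 < p) (hp1 : p < 1)
    (S : Matrix (Fin n) (Fin n) ℝ) (hS : S.PosDef)
    (α : ℝ) (hα0 : 0 < α) (hα1 : α < 1)
    (hpos : 0 < ∫ z, (∑ i, (if oracleRule n k p S α z.2 i then (1 : ℝ) else 0))
      ∂(jointMeasure n k p S)) :
    (∫ z, (∑ i, (if oracleRule n k p S α z.2 i then (1 : ℝ) else 0) *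
          (if z.1 i = false then (1 : ℝ) else 0)) ∂(jointMeasure n k p S)) /
      (∫ z, (∑ i, (if oracleRule n k p S α z.2 i then (1 : ℝ) else 0))
        ∂(jointMeasure n k p S)) ≤ α := by
  have hdet : 0 < S.det := hS.det_pos
  set μ := jointMeasure n k p S with hμ
  by_cases hGint : Integrable
      (fun z : (Fin n → Bool) × (Fin n → ℝ) =>
        (∑ i, (if oracleRule n k p S α z.2 i then (1 : ℝ) else 0))) μ
  swap
  · rw [integral_undef hGint] at hpos
    exact absurd hpos (lt_irrefl 0)
  by_cases hFint : Integrable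
      (fun z : (Fin n → Bool) × (Fin n → ℝ) =>
        (∑ i, (if oracleRule n k p S α z.2 i then (1 : ℝ) else 0) *
          (if z.1 i = false then (1 : ℝ) else 0))) μ
  swap
  · rw [integral_undef hFint, zero_div]
    exact hα0.le
  rw [div_le_iff₀ hpos]
  rw [joint_integral hp0 hp1 hdet hFint, joint_integral hp0 hp1 hdet hGint]
  have hIF := fun θ : Fin n → Bool => integrable_component hp0 hp1 hdet hFint θ
  have hIG := fun θ : Fin n → Bool => integrable_component hp0 hp1 hdet hGint θ
  rw [← integral_finset_sum _ (fun θ _ => hIF θ), ← integral_finset_sum _ (fun θ _ => hIG θ),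
    ← integral_const_mul]
  refine integral_mono (integrable_finset_sum _ (fun θ _ => hIF θ))
    ((integrable_finset_sum _ (fun θ _ => hIG θ)).const_mul α) fun x => ?_
  simpa using pointwise_bound hn hp0 hp1 hdet α x
end
end
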